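/- Let α ∈ (0, 1), let q_lo, q_hi : ℝ^p → ℝ be measurable functions, and let (X_1, Y_1), …, (X_{m+1}, Y_{m+1}) be exchangeable random variables in ℝ^p × ℝ. Define E_i = max(q_lo(X_i) − Y_i, Y_i − q_hi(X_i)) for i = 1, …, m+1, and assume the E_i are almost surely pairwise distinct. Let k = ⌈(1−α)(m+1)⌉, assume k ≤ m, and let Q_{1−α} be the k-th smallest value among E_1, …, E_m. Then P( q_lo(X_{m+1}) − Q_{1−α} ≤ Y_{m+1} ≤ q_hi(X_{m+1}) + Q_{1−α} ) ≤ 1 − α + 1/(m+1). -/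

import Mathlib

open MeasureTheory

/-- A finite family of random variables is exchangeable if its joint distribution is invariant
under every permutation of the indices. -/
def Exchangeable {Ω α : Type*} [MeasurableSpace Ω] [MeasurableSpace α]
    (μ : Measure Ω) {n : ℕ} (Z : Fin n → Ω → α) : Prop :=
  ∀ σ : Equiv.Perm (Fin n),
    Measure.map (fun ω (i : Fin n) => Z (σ i) ω) μ = Measure.map (fun ω (i : Fin n) => Z i ω) μ

/-- The `k`-th order statistic (the `k`-th smallest value, `1 ≤ k ≤ n`) of `w : Fin n → ℝ`,
obtained by sorting the values in nondecreasing order. Junk value `0` when `k - 1 ≥ n`. -/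
noncomputable def orderStat {n : ℕ} (w : Fin n → ℝ) (k : ℕ) : ℝ :=
  if h : k - 1 < n then (w ∘ Tuple.sort w) ⟨k - 1, h⟩ else 0

open scoped ENNReal NNReal

lemma card_lt_orderStat {m : ℕ} (w : Fin m → ℝ) (k : ℕ) (hk1 : 1 ≤ k) (hkm : k ≤ m) :
    (Finset.univ.filter fun i => w i < orderStat w k).card ≤ k - 1 := by
  classical
  have hlt : k - 1 < m := by omega
  have hQ : orderStat w k = (w ∘ Tuple.sort w) ⟨k - 1, hlt⟩ := dif_pos hlt
  set σ := Tuple.sort w with hσ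
  have hmono : Monotone (w ∘ σ) := Tuple.monotone_sort w
  refine le_trans (Finset.card_le_card_of_injOn (t := Finset.range (k - 1)) (fun i => ((σ.symm i : Fin m) : ℕ))
    ?_ ?_) (le_of_eq (Finset.card_range _))
  · intro i hi
    simp only [Finset.mem_coe, Finset.mem_filter, Finset.mem_univ, true_and] at hi
    simp only [Finset.mem_coe, Finset.mem_range]
    by_contra h
    push_neg at h
    have hle : (⟨k - 1, hlt⟩ : Fin m) ≤ σ.symm i := by
      simpa [Fin.le_def] using h
    have := hmono hle
    simp only [Function.comp_apply, Equiv.apply_symm_apply] at this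
    rw [hQ] at hi
    simp only [Function.comp_apply] at hi
    linarith
  · intro i _ j _ h
    have : σ.symm i = σ.symm j := Fin.val_injective h
    exact σ.symm.injective this

lemma card_rank_lt {n k : ℕ} (e : Fin n → ℝ) (hdist : ∀ i j : Fin n, i ≠ j → e i ≠ e j) :
    (Finset.univ.filter fun i =>
      (Finset.univ.filter fun j => e j < e i).card < k).card ≤ k := by
  classical
  set r : Fin n → ℕ := fun i => (Finset.univ.filter fun j => e j < e i).card with hr
  have hrmono : ∀ i i', e i < e i' → r i < r i' := by
    intro i i' h
    apply Finset.card_lt_card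
    constructor
    · intro j hj
      simp only [Finset.mem_filter, Finset.mem_univ, true_and] at hj ⊢
      linarith
    · intro hsub
      have hi : i ∈ Finset.univ.filter fun j => e j < e i' := by
        simp only [Finset.mem_filter, Finset.mem_univ, true_and]; exact h
      have := hsub hi
      simp only [Finset.mem_filter, Finset.mem_univ, true_and] at this
      exact lt_irrefl _ this
  have hinj : Function.Injective r := by
    intro i j h
    by_contra hne
    rcases lt_trichotomy (e i) (e j) with hlt | heq | hgt
    · exact absurd h (Nat.ne_of_lt (hrmono _ _ hlt))
    · exact hdist i j hne heq
    · exact absurd h.symm (Nat.ne_of_lt (hrmono _ _ hgt))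
  refine le_trans (Finset.card_le_card_of_injOn (t := Finset.range k) r ?_ ?_) (le_of_eq (Finset.card_range _))
  · intro i hi
    simp only [Finset.mem_coe, Finset.mem_filter, Finset.mem_univ, true_and] at hi
    simpa using hi
  · exact fun i _ j _ h => hinj h

lemma card_filter_comp_perm {n : Type*} [Fintype n] [DecidableEq n] (σ : Equiv.Perm n)
    (P : n → Prop) [DecidablePred P] :
    (Finset.univ.filter fun j => P (σ j)).card = (Finset.univ.filter P).card := by
  have : (Finset.univ.filter fun j => P (σ j)) = Finset.image σ.symm (Finset.univ.filter P) := by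
    ext j
    simp only [Finset.mem_filter, Finset.mem_univ, true_and, Finset.mem_image]
    constructor
    · intro h; exact ⟨σ j, h, σ.symm_apply_apply j⟩
    · rintro ⟨a, ha, rfl⟩; simpa using ha
  rw [this, Finset.card_image_of_injective _ σ.symm.injective]
/-- Near-perfect-calibration upper bound of Theorem 1 for CQR, conditional on the proper
training set: if the pairs `(X i, Y i)`, `i = 1, …, m+1`, are exchangeable, the conformity
scores `E i = max (q_lo (X i) - Y i) (Y i - q_hi (X i))` are almost surely pairwise distinct,
`k = ⌈(1-α)(m+1)⌉ ≤ m` and `Q_{1-α}` is the `k`-th smallest value among `E 1, …, E m`, then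
`P(q_lo (X (m+1)) - Q_{1-α} ≤ Y (m+1) ≤ q_hi (X (m+1)) + Q_{1-α}) ≤ 1 - α + 1/(m+1)`. -/
theorem cqr_coverage_upper {Ω : Type*} [MeasurableSpace Ω]
    (μ : Measure Ω) [IsProbabilityMeasure μ] {m p : ℕ}
    (qlo qhi : (Fin p → ℝ) → ℝ) (hqlo : Measurable qlo) (hqhi : Measurable qhi)
    (X : Fin (m + 1) → Ω → (Fin p → ℝ)) (Y : Fin (m + 1) → Ω → ℝ)
    (hmeas : ∀ i, Measurable fun ω => (X i ω, Y i ω))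
    (hexch : Exchangeable μ fun i ω => (X i ω, Y i ω))
    (α : ℝ) (hα : α ∈ Set.Ioo (0 : ℝ) 1)
    (E : Fin (m + 1) → Ω → ℝ)
    (hE : E = fun i ω => max (qlo (X i ω) - Y i ω) (Y i ω - qhi (X i ω)))
    (hdist : ∀ᵐ ω ∂μ, ∀ i j : Fin (m + 1), i ≠ j → E i ω ≠ E j ω)
    (hk : ⌈(1 - α) * ((m : ℝ) + 1)⌉₊ ≤ m)
    (Q : Ω → ℝ)
    (hQ : Q = fun ω =>
      orderStat (fun i : Fin m => E i.castSucc ω) ⌈(1 - α) * ((m : ℝ) + 1)⌉₊) :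
    μ {ω | qlo (X (Fin.last m) ω) - Q ω ≤ Y (Fin.last m) ω ∧
           Y (Fin.last m) ω ≤ qhi (X (Fin.last m) ω) + Q ω} ≤
      ENNReal.ofReal (1 - α + 1 / ((m : ℝ) + 1)) := by
  classical
  set k : ℕ := ⌈(1 - α) * ((m : ℝ) + 1)⌉₊ with hkdef
  have hxpos : 0 < (1 - α) * ((m : ℝ) + 1) := by
    have h1 : α < 1 := hα.2
    have : (0:ℝ) < (m:ℝ) + 1 := by positivity
    nlinarith
  have hk1 : 1 ≤ k := Nat.one_le_iff_ne_zero.mpr (Nat.ceil_pos.mpr hxpos).ne'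
  -- the conformity score function
  set f : ((Fin p → ℝ) × ℝ) → ℝ := fun z => max (qlo z.1 - z.2) (z.2 - qhi z.1) with hfdef
  have hfm : Measurable f :=
    ((hqlo.comp measurable_fst).sub measurable_snd).max
      (measurable_snd.sub (hqhi.comp measurable_fst))
  have hEf : ∀ i ω, E i ω = f (X i ω, Y i ω) := by intro i ω; rw [hE]
  -- the joint random vector
  set Z : Ω → (Fin (m + 1) → (Fin p → ℝ) × ℝ) := fun ω i => (X i ω, Y i ω) with hZdef
  have hZm : Measurable Z := measurable_pi_lambda _ hmeas
  -- the rank events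
  set T : Fin (m + 1) → Set (Fin (m + 1) → (Fin p → ℝ) × ℝ) := fun i =>
    {v | (Finset.univ.filter fun j => f (v j) < f (v i)).card < k} with hTdef
  have hcount : ∀ i : Fin (m + 1),
      Measurable fun v : Fin (m + 1) → (Fin p → ℝ) × ℝ =>
        (Finset.univ.filter fun j => f (v j) < f (v i)).card := by
    intro i
    have : ∀ v : Fin (m + 1) → (Fin p → ℝ) × ℝ,
        (Finset.univ.filter fun j => f (v j) < f (v i)).card
          = ∑ j : Fin (m + 1), if f (v j) < f (v i) then 1 else 0 := by
      intro v; rw [Finset.card_filter]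
    simp_rw [this]
    apply Finset.measurable_sum
    intro j _
    exact Measurable.ite (measurableSet_lt (hfm.comp (measurable_pi_apply j))
      (hfm.comp (measurable_pi_apply i))) measurable_const measurable_const
  have hTm : ∀ i, MeasurableSet (T i) := by
    intro i
    exact (hcount i) (measurableSet_lt measurable_id measurable_const : MeasurableSet (Set.Iio k))
  set A : Fin (m + 1) → Set Ω := fun i => Z ⁻¹' T i with hAdef
  have hAm : ∀ i, MeasurableSet (A i) := fun i => hZm (hTm i)
  have hAmem : ∀ i ω, ω ∈ A i ↔
      (Finset.univ.filter fun j => E j ω < E i ω).card < k := by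
    intro i ω
    simp only [hAdef, Set.mem_preimage, hTdef, Set.mem_setOf_eq]
    constructor <;> intro h <;> convert h using 2 <;> ext j <;>
      simp [hEf, hZdef]
  -- exchangeability: all A i have the same probability
  have hAeq : ∀ i, μ (A i) = μ (A (Fin.last m)) := by
    intro i
    have hσm : Measurable fun v : Fin (m + 1) → (Fin p → ℝ) × ℝ => v ∘ (Equiv.swap i (Fin.last m)) :=
      measurable_pi_lambda _ (fun j => measurable_pi_apply ((Equiv.swap i (Fin.last m)) j))
    have hTpre : T i = (fun v : Fin (m + 1) → (Fin p → ℝ) × ℝ => v ∘ (Equiv.swap i (Fin.last m))) ⁻¹' T (Fin.last m) := by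
      ext v
      simp only [hTdef, Set.mem_setOf_eq, Set.mem_preimage, Function.comp_apply,
        Equiv.swap_apply_right]
      rw [card_filter_comp_perm (Equiv.swap i (Fin.last m)) (fun j => f (v j) < f (v i))]
    have key : Measure.map Z μ (T i) = Measure.map Z μ (T (Fin.last m)) := by
      rw [hTpre, ← Measure.map_apply hσm (hTm (Fin.last m)),
        Measure.map_map hσm hZm]
      have : ((fun v : Fin (m + 1) → (Fin p → ℝ) × ℝ => v ∘ (Equiv.swap i (Fin.last m))) ∘ Z)
          = fun ω (j : Fin (m + 1)) => (X ((Equiv.swap i (Fin.last m)) j) ω, Y ((Equiv.swap i (Fin.last m)) j) ω) := rfl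
      rw [this, hexch (Equiv.swap i (Fin.last m))]
    have h1 : μ (A i) = Measure.map Z μ (T i) := (Measure.map_apply hZm (hTm i)).symm
    have h2 : μ (A (Fin.last m)) = Measure.map Z μ (T (Fin.last m)) :=
      (Measure.map_apply hZm (hTm (Fin.last m))).symm
    rw [h1, h2, key]
  -- sum bound via a.s. injectivity of ranks
  have hsum : ∑ i : Fin (m + 1), μ (A i) ≤ (k : ℝ≥0∞) := by
    have hind : ∀ i : Fin (m + 1), μ (A i) = ∫⁻ ω, (A i).indicator 1 ω ∂μ :=
      fun i => (lintegral_indicator_one (hAm i)).symm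
    calc ∑ i : Fin (m + 1), μ (A i)
        = ∑ i : Fin (m + 1), ∫⁻ ω, (A i).indicator 1 ω ∂μ := by
          exact Finset.sum_congr rfl fun i _ => hind i
      _ = ∫⁻ ω, ∑ i : Fin (m + 1), (A i).indicator 1 ω ∂μ :=
          (lintegral_finset_sum _ fun i _ => (measurable_one.indicator (hAm i))).symm
      _ ≤ ∫⁻ _, (k : ℝ≥0∞) ∂μ := by
          apply lintegral_mono_ae
          filter_upwards [hdist] with ω hω
          have : ∑ i : Fin (m + 1), (A i).indicator (1 : Ω → ℝ≥0∞) ω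
              = ((Finset.univ.filter fun i : Fin (m + 1) => ω ∈ A i).card : ℝ≥0∞) := by
            rw [← Finset.sum_boole]
            exact Finset.sum_congr rfl fun i _ => by
              by_cases h : ω ∈ A i <;> simp [Set.indicator_apply, h]
          rw [this]
          have hle : (Finset.univ.filter fun i : Fin (m + 1) => ω ∈ A i).card ≤ k := by
            have heq : (Finset.univ.filter fun i : Fin (m + 1) => ω ∈ A i)
                = Finset.univ.filter fun i : Fin (m + 1) =>
                    (Finset.univ.filter fun j => E j ω < E i ω).card < k := by
              ext i; simp [hAmem i ω]
            rw [heq]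
            exact card_rank_lt (fun i => E i ω) hω
          exact_mod_cast Nat.cast_le.mpr hle
      _ = (k : ℝ≥0∞) := by simp
  -- hence μ (A last) ≤ k / (m+1)
  have hconst : ∑ i : Fin (m + 1), μ (A i) = (m + 1 : ℝ≥0∞) * μ (A (Fin.last m)) := by
    calc ∑ i : Fin (m + 1), μ (A i) = ∑ _i : Fin (m + 1), μ (A (Fin.last m)) :=
          Finset.sum_congr rfl fun i _ => hAeq i
      _ = (m + 1 : ℝ≥0∞) * μ (A (Fin.last m)) := by
          rw [Finset.sum_const, Finset.card_univ, Fintype.card_fin, nsmul_eq_mul]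
          push_cast; ring_nf
  have hAlast : μ (A (Fin.last m)) ≤ (k : ℝ≥0∞) / ((m : ℝ≥0∞) + 1) := by
    rw [ENNReal.le_div_iff_mul_le (Or.inl (by simp)) (Or.inl (by finiteness))]
    rw [mul_comm]
    rw [hconst] at hsum
    exact_mod_cast hsum
  -- the coverage event is contained in A last
  have hsub : {ω | qlo (X (Fin.last m) ω) - Q ω ≤ Y (Fin.last m) ω ∧
      Y (Fin.last m) ω ≤ qhi (X (Fin.last m) ω) + Q ω} ⊆ A (Fin.last m) := by
    intro ω hω
    obtain ⟨h1, h2⟩ := hω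
    have hEQ : E (Fin.last m) ω ≤ Q ω := by
      rw [hE]; exact max_le (by linarith) (by linarith)
    rw [hAmem]
    have hQval : Q ω = orderStat (fun i : Fin m => E i.castSucc ω) k := by rw [hQ]
    have hbound := card_lt_orderStat (fun i : Fin m => E i.castSucc ω) k hk1 hk
    have hsub2 : (Finset.univ.filter fun j : Fin (m + 1) => E j ω < E (Fin.last m) ω)
        ⊆ Finset.image Fin.castSucc
          (Finset.univ.filter fun i : Fin m =>
            E i.castSucc ω < orderStat (fun i : Fin m => E i.castSucc ω) k) := by
      intro j hj
      simp only [Finset.mem_filter, Finset.mem_univ, true_and] at hj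
      have hjne : j ≠ Fin.last m := by
        intro h; rw [h] at hj; exact lt_irrefl _ hj
      obtain ⟨j', rfl⟩ := Fin.exists_castSucc_eq.mpr hjne
      rw [Finset.mem_image]
      refine ⟨j', ?_, rfl⟩
      simp only [Finset.mem_filter, Finset.mem_univ, true_and]
      rw [← hQval]
      linarith
    calc (Finset.univ.filter fun j : Fin (m + 1) => E j ω < E (Fin.last m) ω).card
        ≤ _ := Finset.card_le_card hsub2
      _ ≤ (Finset.univ.filter fun i : Fin m =>
            E i.castSucc ω < orderStat (fun i : Fin m => E i.castSucc ω) k).card :=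
          Finset.card_image_le
      _ ≤ k - 1 := hbound
      _ < k := by omega
  -- put everything together
  calc μ {ω | qlo (X (Fin.last m) ω) - Q ω ≤ Y (Fin.last m) ω ∧
           Y (Fin.last m) ω ≤ qhi (X (Fin.last m) ω) + Q ω}
      ≤ μ (A (Fin.last m)) := measure_mono hsub
    _ ≤ (k : ℝ≥0∞) / ((m : ℝ≥0∞) + 1) := hAlast
    _ ≤ ENNReal.ofReal (1 - α + 1 / ((m : ℝ) + 1)) := by
        have hmpos : (0:ℝ) < (m:ℝ) + 1 := by positivity
        have hceil : (k : ℝ) < (1 - α) * ((m : ℝ) + 1) + 1 :=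
          Nat.ceil_lt_add_one hxpos.le
        have hre : (k : ℝ) / ((m : ℝ) + 1) ≤ 1 - α + 1 / ((m : ℝ) + 1) := by
          rw [div_le_iff₀ hmpos]
          have : (1 - α + 1 / ((m : ℝ) + 1)) * ((m : ℝ) + 1)
              = (1 - α) * ((m : ℝ) + 1) + 1 := by
            field_simp
          rw [this]; linarith
        have h1 : (k : ℝ≥0∞) / ((m : ℝ≥0∞) + 1)
            = ENNReal.ofReal ((k : ℝ) / ((m : ℝ) + 1)) := by
          rw [ENNReal.ofReal_div_of_pos hmpos]
          congr 1
          · exact (ENNReal.ofReal_natCast k).symm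
          · rw [ENNReal.ofReal_add (by positivity) zero_le_one]
            simp [ENNReal.ofReal_natCast]
        rw [h1]
        exact ENNReal.ofReal_le_ofReal hre
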